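/- Let (X, μ) be a standard Borel space with an atomless Borel probability measure μ and let Φ be a finite family of partial isomorphisms of (X, μ). Suppose there exist δ > 0 and, for every n ∈ ℕ, Borel sets A_n, B_n ⊆ X with μ(A_n) ≥ δ, μ(B_n) ≥ δ and d_Φ(A_n, B_n) ≥ n + 1. Then there exists a nontrivial asymptotically invariant sequence of Borel subsets of X for Φ. -/

import Mathlib

open MeasureTheory Filter Set
open scoped ENNReal

/-- A partial isomorphism of a standard Borel space `X`: a Borel bijection between
two Borel subsets `dom` and `ran` of `X`, with Borel inverse. -/
structure PartialIso (X : Type*) [MeasurableSpace X] where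
  dom : Set X
  ran : Set X
  toFun : X → X
  invFun : X → X
  measurableSet_dom : MeasurableSet dom
  measurableSet_ran : MeasurableSet ran
  measurable_toFun : Measurable toFun
  measurable_invFun : Measurable invFun
  mapsTo : Set.MapsTo toFun dom ran
  mapsTo_inv : Set.MapsTo invFun ran dom
  left_inv : ∀ x ∈ dom, invFun (toFun x) = x
  right_inv : ∀ y ∈ ran, toFun (invFun y) = y

namespace PartialIso

variable {X : Type*} [MeasurableSpace X]

/-- The identity as a partial isomorphism. -/
def refl (X : Type*) [MeasurableSpace X] : PartialIso X :=
  ⟨Set.univ, Set.univ, id, id, MeasurableSet.univ, MeasurableSet.univ,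
   measurable_id, measurable_id, Set.mapsTo_univ _ _, Set.mapsTo_univ _ _,
   fun _ _ => rfl, fun _ _ => rfl⟩

/-- The inverse of a partial isomorphism. -/
def symm (f : PartialIso X) : PartialIso X :=
  ⟨f.ran, f.dom, f.invFun, f.toFun, f.measurableSet_ran, f.measurableSet_dom,
   f.measurable_invFun, f.measurable_toFun, f.mapsTo_inv, f.mapsTo,
   f.right_inv, f.left_inv⟩

/-- Composition (first `f`, then `g`) of partial isomorphisms, on its natural domain. -/
def trans (f g : PartialIso X) : PartialIso X where
  dom := f.dom ∩ f.toFun ⁻¹' g.dom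
  ran := g.ran ∩ g.invFun ⁻¹' f.ran
  toFun := g.toFun ∘ f.toFun
  invFun := f.invFun ∘ g.invFun
  measurableSet_dom := f.measurableSet_dom.inter (f.measurable_toFun g.measurableSet_dom)
  measurableSet_ran := g.measurableSet_ran.inter (g.measurable_invFun f.measurableSet_ran)
  measurable_toFun := g.measurable_toFun.comp f.measurable_toFun
  measurable_invFun := f.measurable_invFun.comp g.measurable_invFun
  mapsTo := by
    rintro x ⟨hx1, hx2⟩
    refine ⟨g.mapsTo hx2, ?_⟩
    show g.invFun (g.toFun (f.toFun x)) ∈ f.ran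
    rw [g.left_inv _ hx2]
    exact f.mapsTo hx1
  mapsTo_inv := by
    rintro y ⟨hy1, hy2⟩
    refine ⟨f.mapsTo_inv hy2, ?_⟩
    show f.toFun (f.invFun (g.invFun y)) ∈ g.dom
    rw [f.right_inv _ hy2]
    exact g.mapsTo_inv hy1
  left_inv := by
    rintro x ⟨hx1, hx2⟩
    show f.invFun (g.invFun (g.toFun (f.toFun x))) = x
    rw [g.left_inv _ hx2, f.left_inv _ hx1]
  right_inv := by
    rintro y ⟨hy1, hy2⟩
    show g.toFun (f.toFun (f.invFun (g.invFun y))) = y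
    rw [f.right_inv _ hy2, g.right_inv _ hy1]

/-- A partial isomorphism is nonsingular for `μ` (is a partial isomorphism of `(X, μ)`)
if it maps null sets inside its domain exactly to null sets. -/
def Nonsingular (μ : Measure X) (f : PartialIso X) : Prop :=
  ∀ A ⊆ f.dom, MeasurableSet A → (μ A = 0 ↔ μ (f.toFun '' A) = 0)

/-- The graph of the partial isomorphism `f` is contained in the relation `R`. -/
def IsInnerOf (f : PartialIso X) (R : Set (X × X)) : Prop :=
  ∀ x ∈ f.dom, (x, f.toFun x) ∈ R

end PartialIso

variable {X : Type*} [MeasurableSpace X]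

/-- `IsWord Φ m k` : `m` is a `Φ`-word of length `k`, i.e. a composition of `k` elements
of `Φ` and their inverses (on its natural domain). -/
def IsWord (Φ : Set (PartialIso X)) (m : PartialIso X) (k : ℕ) : Prop :=
  ∃ l : List (PartialIso X), l.length = k ∧
    (∀ φ ∈ l, φ ∈ Φ ∨ ∃ ψ ∈ Φ, φ = ψ.symm) ∧
    m = l.foldl PartialIso.trans (PartialIso.refl X)

/-- `wordDistLE Φ μ A B r` : the essential distance `d_Φ(A, B)` is at most `r`, i.e. the
set of points of `A` sent into `B` by some `Φ`-word of length at most `r` has positive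
measure. -/
def wordDistLE (Φ : Set (PartialIso X)) (μ : Measure X) (A B : Set X) (r : ℕ) : Prop :=
  0 < μ {x ∈ A | ∃ m k, IsWord Φ m k ∧ k ≤ r ∧ x ∈ m.dom ∧ m.toFun x ∈ B}

/-- The metric-measure space `(X, d_Φ, μ)` is concentrated. -/
def Concentrated (Φ : Set (PartialIso X)) (μ : Measure X) : Prop :=
  ∀ δ : ℝ≥0∞, 0 < δ → ∃ r : ℕ, ∀ A B : Set X, MeasurableSet A → MeasurableSet B →
    δ ≤ μ A → δ ≤ μ B → wordDistLE Φ μ A B r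

/-- The metric `d_Φ` is ergodic relative to `μ` : any two sets of positive measure are at
finite essential distance. -/
def MetricErgodic (Φ : Set (PartialIso X)) (μ : Measure X) : Prop :=
  ∀ A B : Set X, MeasurableSet A → MeasurableSet B → 0 < μ A → 0 < μ B →
    ∃ r : ℕ, wordDistLE Φ μ A B r

/-- A sequence of Borel sets is asymptotically invariant for the family `Φ`. -/
def AsympInvariant (Φ : Set (PartialIso X)) (μ : Measure X) (A : ℕ → Set X) : Prop :=
  ∀ m k, IsWord Φ m k →
    Tendsto (fun n => μ (m.toFun '' (A n ∩ m.dom) \ A n)) atTop (nhds 0)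

/-- A sequence of Borel sets is nontrivial: measures uniformly bounded away from `0` and `1`. -/
def NontrivialSeq (μ : Measure X) (A : ℕ → Set X) : Prop :=
  ∃ δ : ℝ≥0∞, 0 < δ ∧ ∀ n, δ ≤ μ (A n) ∧ μ (A n) ≤ 1 - δ

/-- A countable Borel equivalence relation on `X`. -/
def IsCountableBorelER (R : Set (X × X)) : Prop :=
  MeasurableSet R ∧ Equivalence (fun x y => (x, y) ∈ R) ∧ ∀ x, {y | (x, y) ∈ R}.Countable

/-- `μ` is quasi-invariant for `R` : partial isomorphisms of `R` map null sets to null sets. -/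
def QuasiInvariant (μ : Measure X) (R : Set (X × X)) : Prop :=
  ∀ f : PartialIso X, f.IsInnerOf R → ∀ N ⊆ f.dom, MeasurableSet N → μ N = 0 →
    μ (f.toFun '' N) = 0

/-- `μ` is invariant for `R` : partial isomorphisms of `R` preserve the measure. -/
def InvariantMeasure (μ : Measure X) (R : Set (X × X)) : Prop :=
  ∀ f : PartialIso X, f.IsInnerOf R → ∀ A ⊆ f.dom, MeasurableSet A →
    μ (f.toFun '' A) = μ A

/-- `R` is ergodic for `μ` : every Borel saturated set is null or conull. -/
def ErgodicRel (μ : Measure X) (R : Set (X × X)) : Prop :=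
  ∀ A : Set X, MeasurableSet A → (∀ x ∈ A, ∀ y, (x, y) ∈ R → y ∈ A) →
    μ A = 0 ∨ μ Aᶜ = 0

/-- `Φ` is a graphing of `R` : a family of partial isomorphisms of `R` whose words connect
almost every pair of equivalent points. -/
def IsGraphing (Φ : Set (PartialIso X)) (μ : Measure X) (R : Set (X × X)) : Prop :=
  (∀ φ ∈ Φ, φ.IsInnerOf R) ∧
  ∀ᵐ x ∂μ, ∀ y, (x, y) ∈ R → ∃ m k, IsWord Φ m k ∧ x ∈ m.dom ∧ m.toFun x = y

/-- A sequence of Borel sets is asymptotically invariant for the relation `R`. -/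
def AsympInvariantRel (μ : Measure X) (R : Set (X × X)) (A : ℕ → Set X) : Prop :=
  ∀ f : PartialIso X, f.IsInnerOf R →
    Tendsto (fun n => μ (f.toFun '' (A n ∩ f.dom) \ A n)) atTop (nhds 0)

/-- `R` is strongly ergodic : every asymptotically invariant sequence is trivial. -/
def StronglyErgodic (μ : Measure X) (R : Set (X × X)) : Prop :=
  ¬ ∃ A : ℕ → Set X, (∀ n, MeasurableSet (A n)) ∧ AsympInvariantRel μ R A ∧
    NontrivialSeq μ A

/-- The boundary `∂_Φ A` of a set `A` with respect to the family `Φ`. -/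
def bdry (Φ : Set (PartialIso X)) (A : Set X) : Set X :=
  (⋃ φ ∈ Φ, φ.toFun '' (A ∩ φ.dom) ∪ φ.invFun '' (A ∩ φ.ran)) \ A

/-- A vanishing Følner sequence for the family `Φ`. -/
def VanishingFolner (Φ : Set (PartialIso X)) (μ : Measure X) (A : ℕ → Set X) : Prop :=
  (∀ n, MeasurableSet (A n)) ∧ (∀ n, 0 < μ (A n)) ∧
  Tendsto (fun n => μ (A n)) atTop (nhds 0) ∧
  Tendsto (fun n => μ (bdry Φ (A n)) / μ (A n)) atTop (nhds 0)

/-- The equivalence relation generated by the family `Φ` : `(x, y) ∈ RGen Φ` iff `y = m x`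
for some `Φ`-word `m`. -/
def RGen (Φ : Set (PartialIso X)) : Set (X × X) :=
  {p | ∃ m k, IsWord Φ m k ∧ p.1 ∈ m.dom ∧ m.toFun p.1 = p.2}

namespace PartialIso

variable {X : Type*} [MeasurableSpace X]

theorem ext' {f g : PartialIso X} (h1 : f.dom = g.dom) (h2 : f.ran = g.ran)
    (h3 : f.toFun = g.toFun) (h4 : f.invFun = g.invFun) : f = g := by
  cases f; cases g; dsimp at h1 h2 h3 h4; subst h1 h2 h3 h4; rfl

theorem symm_symm (f : PartialIso X) : f.symm.symm = f := rfl

theorem symm_trans (f g : PartialIso X) : (f.trans g).symm = g.symm.trans f.symm := rfl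

theorem refl_symm : (refl X).symm = refl X := rfl

theorem trans_assoc (f g h : PartialIso X) : (f.trans g).trans h = f.trans (g.trans h) := by
  apply ext'
  · show (f.dom ∩ f.toFun ⁻¹' g.dom) ∩ (g.toFun ∘ f.toFun) ⁻¹' h.dom
      = f.dom ∩ f.toFun ⁻¹' (g.dom ∩ g.toFun ⁻¹' h.dom)
    simp [Set.preimage_comp, Set.preimage_inter, Set.inter_assoc]
  · show h.ran ∩ h.invFun ⁻¹' (g.ran ∩ g.invFun ⁻¹' f.ran)
      = (h.ran ∩ h.invFun ⁻¹' g.ran) ∩ (g.invFun ∘ h.invFun) ⁻¹' f.ran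
    simp [Set.preimage_comp, Set.preimage_inter, Set.inter_assoc]
  · rfl
  · rfl

theorem refl_trans (f : PartialIso X) : (refl X).trans f = f := by
  apply ext' <;> simp [trans, refl]

theorem trans_refl (f : PartialIso X) : f.trans (refl X) = f := by
  apply ext' <;> simp [trans, refl]

theorem foldl_trans_eq (l : List (PartialIso X)) (e : PartialIso X) :
    l.foldl trans e = e.trans (l.foldl trans (refl X)) := by
  induction l generalizing e with
  | nil => simp [trans_refl]
  | cons a t ih =>
    simp only [List.foldl_cons]
    rw [ih (e.trans a), ih ((refl X).trans a), refl_trans, trans_assoc]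

theorem symm_foldl (l : List (PartialIso X)) :
    (l.foldl trans (refl X)).symm = (l.reverse.map symm).foldl trans (refl X) := by
  induction l with
  | nil => rfl
  | cons a t ih =>
    rw [List.foldl_cons, foldl_trans_eq, refl_trans, symm_trans, ih,
      List.reverse_cons, List.map_append, List.foldl_append]
    simp

end PartialIso
section WordLemmas

variable {X : Type*} [MeasurableSpace X] {Φ : Set (PartialIso X)} {μ : Measure X}

theorem isWord_refl (Φ : Set (PartialIso X)) : IsWord Φ (PartialIso.refl X) 0 :=
  ⟨[], rfl, by simp, rfl⟩

theorem IsWord.symm {m : PartialIso X} {k : ℕ} (h : IsWord Φ m k) : IsWord Φ m.symm k := by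
  obtain ⟨l, hlen, hmem, rfl⟩ := h
  refine ⟨l.reverse.map PartialIso.symm, by simp [hlen], ?_, PartialIso.symm_foldl l⟩
  intro φ hφ
  rw [List.mem_map] at hφ
  obtain ⟨ψ, hψ, rfl⟩ := hφ
  rcases hmem ψ (List.mem_reverse.mp hψ) with h | ⟨χ, hχ, rfl⟩
  · exact Or.inr ⟨ψ, h, rfl⟩
  · exact Or.inl (by rwa [PartialIso.symm_symm])

theorem IsWord.trans {m m' : PartialIso X} {k k' : ℕ} (h : IsWord Φ m k)
    (h' : IsWord Φ m' k') : IsWord Φ (m.trans m') (k + k') := by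
  obtain ⟨l, hlen, hmem, rfl⟩ := h
  obtain ⟨l', hlen', hmem', rfl⟩ := h'
  refine ⟨l ++ l', by simp [hlen, hlen'], ?_, ?_⟩
  · intro φ hφ
    rcases List.mem_append.mp hφ with h | h
    · exact hmem φ h
    · exact hmem' φ h
  · rw [List.foldl_append, PartialIso.foldl_trans_eq l' (l.foldl PartialIso.trans (PartialIso.refl X))]

theorem nonsingular_refl : (PartialIso.refl X).Nonsingular μ := by
  intro A _ _
  simp [PartialIso.refl, Set.image_id]

theorem PartialIso.Nonsingular.symm {f : PartialIso X} (hf : f.Nonsingular μ) :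
    f.symm.Nonsingular μ := by
  intro A hA hAm
  have hsub : f.invFun '' A = f.dom ∩ f.toFun ⁻¹' A := by
    ext x
    constructor
    · rintro ⟨y, hy, rfl⟩
      exact ⟨f.mapsTo_inv (hA hy), by rwa [Set.mem_preimage, f.right_inv y (hA hy)]⟩
    · rintro ⟨hx1, hx2⟩
      exact ⟨f.toFun x, hx2, f.left_inv x hx1⟩
  have himg : f.toFun '' (f.dom ∩ f.toFun ⁻¹' A) = A := by
    ext y
    constructor
    · rintro ⟨x, ⟨_, hx2⟩, rfl⟩
      exact hx2
    · intro hy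
      exact ⟨f.invFun y, ⟨f.mapsTo_inv (hA hy), by rwa [Set.mem_preimage, f.right_inv y (hA hy)]⟩,
        f.right_inv y (hA hy)⟩
  have key := hf (f.dom ∩ f.toFun ⁻¹' A) Set.inter_subset_left
    (f.measurableSet_dom.inter (f.measurable_toFun hAm))
  rw [himg] at key
  show μ A = 0 ↔ μ (f.invFun '' A) = 0
  rw [hsub]
  exact key.symm

theorem PartialIso.Nonsingular.trans {f g : PartialIso X} (hf : f.Nonsingular μ)
    (hg : g.Nonsingular μ) : (f.trans g).Nonsingular μ := by
  intro A hA hAm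
  have hAf : A ⊆ f.dom := fun x hx => (hA hx).1
  have hfAg : f.toFun '' A ⊆ g.dom := by
    rintro y ⟨x, hx, rfl⟩
    exact (hA hx).2
  have h1 : μ A = 0 ↔ μ (f.toFun '' A) = 0 := hf A hAf hAm
  have himg : (f.trans g).toFun '' A = g.toFun '' (f.toFun '' A) := by
    rw [show (f.trans g).toFun = g.toFun ∘ f.toFun from rfl, Set.image_comp]
  rw [himg]
  constructor
  · intro h0
    obtain ⟨E, hsubE, hEm, hE0⟩ := exists_measurable_superset_of_null (h1.mp h0)
    have hnull : μ (g.toFun '' (E ∩ g.dom)) = 0 :=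
      (hg (E ∩ g.dom) Set.inter_subset_right (hEm.inter g.measurableSet_dom)).mp
        (measure_mono_null Set.inter_subset_left hE0)
    exact measure_mono_null
      (Set.image_mono (Set.subset_inter hsubE hfAg)) hnull
  · intro h0
    obtain ⟨E, hsubE, hEm, hE0⟩ := exists_measurable_superset_of_null h0
    have hE' : μ (g.symm.toFun '' (E ∩ g.ran)) = 0 :=
      (hg.symm (E ∩ g.ran) Set.inter_subset_right (hEm.inter g.measurableSet_ran)).mp
        (measure_mono_null Set.inter_subset_left hE0)
    have hsub2 : f.toFun '' A ⊆ g.invFun '' (E ∩ g.ran) := by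
      intro w hw
      refine ⟨g.toFun w, ⟨hsubE (Set.mem_image_of_mem _ hw), g.mapsTo (hfAg hw)⟩, ?_⟩
      exact g.left_inv w (hfAg hw)
    exact h1.mpr (measure_mono_null hsub2 hE')

theorem IsWord.nonsingular (hns : ∀ φ ∈ Φ, φ.Nonsingular μ) {m : PartialIso X} {k : ℕ}
    (h : IsWord Φ m k) : m.Nonsingular μ := by
  obtain ⟨l, -, hmem, rfl⟩ := h
  induction l with
  | nil => exact nonsingular_refl
  | cons a t ih =>
    rw [List.foldl_cons, PartialIso.foldl_trans_eq, PartialIso.refl_trans]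
    have ha : a.Nonsingular μ := by
      rcases hmem a (List.mem_cons_self) with h | ⟨ψ, hψ, rfl⟩
      · exact hns a h
      · exact (hns ψ hψ).symm
    exact ha.trans (ih (fun φ hφ => hmem φ (List.mem_cons_of_mem a hφ)))

end WordLemmas
section Nbhd

variable {X : Type*} [MeasurableSpace X]

/-- Alphabet: the generators and their inverses. -/
def alphabet (Φ : Set (PartialIso X)) : Set (PartialIso X) := Φ ∪ PartialIso.symm '' Φ

/-- The word evaluated from a list over the alphabet. -/
def wordOfList {Φ : Set (PartialIso X)} (l : List ↥(alphabet Φ)) : PartialIso X :=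
  (l.map Subtype.val).foldl PartialIso.trans (PartialIso.refl X)

theorem isWord_wordOfList {Φ : Set (PartialIso X)} (l : List ↥(alphabet Φ)) :
    IsWord Φ (wordOfList l) l.length := by
  refine ⟨l.map Subtype.val, by simp, ?_, rfl⟩
  intro φ hφ
  rw [List.mem_map] at hφ
  obtain ⟨a, -, rfl⟩ := hφ
  have h2 : (a : PartialIso X) ∈ Φ ∪ PartialIso.symm '' Φ := a.2
  rcases h2 with h | ⟨ψ, hψ, hψ2⟩
  · exact Or.inl h
  · exact Or.inr ⟨ψ, hψ, hψ2.symm⟩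

theorem exists_list_subtype {α : Type*} {s : Set α} (l : List α) (h : ∀ x ∈ l, x ∈ s) :
    ∃ L : List ↥s, L.map Subtype.val = l := by
  induction l with
  | nil => exact ⟨[], rfl⟩
  | cons a t ih =>
    obtain ⟨L, hL⟩ := ih (fun x hx => h x (List.mem_cons_of_mem a hx))
    exact ⟨⟨a, h a (List.mem_cons_self)⟩ :: L, by simp [hL]⟩

/-- The `k`-neighborhood of `A` for the family `Φ`. -/
def nbhd (Φ : Set (PartialIso X)) (A : Set X) (k : ℕ) : Set X :=
  ⋃ (l : List ↥(alphabet Φ)) (_ : l.length ≤ k),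
    ((wordOfList l).dom ∩ (wordOfList l).toFun ⁻¹' A)

theorem mem_nbhd_iff {Φ : Set (PartialIso X)} {A : Set X} {k : ℕ} {x : X} :
    x ∈ nbhd Φ A k ↔
      ∃ m k', IsWord Φ m k' ∧ k' ≤ k ∧ x ∈ m.dom ∧ m.toFun x ∈ A := by
  constructor
  · intro hx
    simp only [nbhd, Set.mem_iUnion] at hx
    obtain ⟨l, hl, hx1, hx2⟩ := hx
    exact ⟨wordOfList l, l.length, isWord_wordOfList l, hl, hx1, hx2⟩
  · rintro ⟨m, k', ⟨l', hlen, hmem, rfl⟩, hk', hx1, hx2⟩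
    simp only [nbhd, Set.mem_iUnion]
    have hmem' : ∀ φ ∈ l', φ ∈ alphabet Φ := by
      intro φ hφ
      rcases hmem φ hφ with h | ⟨ψ, hψ, rfl⟩
      · exact Or.inl h
      · exact Or.inr ⟨ψ, hψ, rfl⟩
    obtain ⟨L, hL⟩ := exists_list_subtype l' hmem'
    have hw : wordOfList L = l'.foldl PartialIso.trans (PartialIso.refl X) := by
      unfold wordOfList; rw [hL]
    have hlenL : L.length = k' := by
      have := congrArg List.length hL
      simpa [hlen] using this
    exact ⟨L, by rw [hlenL]; exact hk', by rw [hw]; exact hx1, by rw [hw]; exact hx2⟩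

theorem measurableSet_nbhd {Φ : Set (PartialIso X)} (hfin : Φ.Finite) {A : Set X}
    (hA : MeasurableSet A) (k : ℕ) : MeasurableSet (nbhd Φ A k) := by
  haveI : Countable ↥(alphabet Φ) :=
    ((hfin.union (hfin.image _)).countable).to_subtype
  exact MeasurableSet.iUnion fun l => MeasurableSet.iUnion fun _ =>
    (wordOfList l).measurableSet_dom.inter ((wordOfList l).measurable_toFun hA)

theorem nbhd_mono {Φ : Set (PartialIso X)} {A : Set X} {k k' : ℕ} (h : k ≤ k') :
    nbhd Φ A k ⊆ nbhd Φ A k' := by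
  intro x hx
  rw [mem_nbhd_iff] at hx ⊢
  obtain ⟨m, j, h1, h2, h3⟩ := hx
  exact ⟨m, j, h1, h2.trans h, h3⟩

theorem subset_nbhd {Φ : Set (PartialIso X)} {A : Set X} {k : ℕ} : A ⊆ nbhd Φ A k :=
  fun x hx => mem_nbhd_iff.mpr
    ⟨PartialIso.refl X, 0, isWord_refl Φ, Nat.zero_le _, Set.mem_univ x, hx⟩

/-- Image of a set within the `k`-neighborhood under a word lands in the
`(k + L)`-neighborhood. -/
theorem image_nbhd_subset {Φ : Set (PartialIso X)} {A : Set X} {k L : ℕ}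
    {m : PartialIso X} (hm : IsWord Φ m L) :
    m.toFun '' (nbhd Φ A k ∩ m.dom) ⊆ nbhd Φ A (k + L) := by
  rintro y ⟨x, ⟨hxS, hxd⟩, rfl⟩
  rw [mem_nbhd_iff] at hxS
  obtain ⟨w, k', hw, hk', hxw, hwA⟩ := hxS
  refine mem_nbhd_iff.mpr ⟨m.symm.trans w, L + k', hm.symm.trans hw, by omega, ?_, ?_⟩
  · refine ⟨m.mapsTo hxd, ?_⟩
    show m.invFun (m.toFun x) ∈ w.dom
    rwa [m.left_inv x hxd]
  · show w.toFun (m.invFun (m.toFun x)) ∈ A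
    rwa [m.left_inv x hxd]

end Nbhd
/-- If there are sets `A_n, B_n` of measure at least `δ > 0` with
`d_Φ(A_n, B_n) ≥ n + 1`, then there is a nontrivial asymptotically invariant sequence
for `Φ`. -/
theorem stmt2 {X : Type*} [MeasurableSpace X] [StandardBorelSpace X]
    (μ : Measure X) [IsProbabilityMeasure μ] [NullSingletonClass μ]
    (Φ : Set (PartialIso X)) (hfin : Φ.Finite)
    (hns : ∀ φ ∈ Φ, φ.Nonsingular μ)
    (δ : ℝ≥0∞) (hδ : 0 < δ)
    (A B : ℕ → Set X) (hA : ∀ n, MeasurableSet (A n)) (hB : ∀ n, MeasurableSet (B n))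
    (hAδ : ∀ n, δ ≤ μ (A n)) (hBδ : ∀ n, δ ≤ μ (B n))
    (hfar : ∀ n : ℕ, ¬ wordDistLE Φ μ (A n) (B n) n) :
    ∃ C : ℕ → Set X, (∀ n, MeasurableSet (C n)) ∧
      AsympInvariant Φ μ C ∧ NontrivialSeq μ C := by
  haveI : Countable ↥(alphabet Φ) := ((hfin.union (hfin.image _)).countable).to_subtype
  -- the target sets `T n` on the `A` side are null
  have hTnull : ∀ n,
      μ {x ∈ A n | ∃ m k, IsWord Φ m k ∧ k ≤ n ∧ x ∈ m.dom ∧ m.toFun x ∈ B n} = 0 :=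
    fun n => le_zero_iff.mp (not_lt.mp (hfar n))
  -- hence the `n`-neighborhoods of `A n` essentially avoid `B n`
  have hSB : ∀ n, μ (nbhd Φ (A n) n ∩ B n) = 0 := by
    intro n
    have hsub : nbhd Φ (A n) n ∩ B n ⊆
        ⋃ (l : List ↥(alphabet Φ)) (_ : l.length ≤ n),
          ((wordOfList l).dom ∩ (wordOfList l).toFun ⁻¹' (A n) ∩ B n) := by
      rintro x ⟨hx1, hx2⟩
      simp only [nbhd, Set.mem_iUnion] at hx1 ⊢
      obtain ⟨l, hl, hd, hp⟩ := hx1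
      exact ⟨l, hl, ⟨hd, hp⟩, hx2⟩
    refine measure_mono_null hsub (measure_iUnion_null fun l => measure_iUnion_null fun hl => ?_)
    set w := wordOfList l with hw
    set V := w.dom ∩ w.toFun ⁻¹' (A n) ∩ B n with hV
    have hVmeas : MeasurableSet V :=
      (w.measurableSet_dom.inter (w.measurable_toFun (hA n))).inter (hB n)
    have hVsub : V ⊆ w.dom := fun x hx => hx.1.1
    have himg : w.toFun '' V ⊆
        {x ∈ A n | ∃ m k, IsWord Φ m k ∧ k ≤ n ∧ x ∈ m.dom ∧ m.toFun x ∈ B n} := by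
      rintro y ⟨x, ⟨⟨hxd, hxA⟩, hxB⟩, rfl⟩
      refine ⟨hxA, w.symm, l.length, (isWord_wordOfList l).symm, hl, w.mapsTo hxd, ?_⟩
      show w.invFun (w.toFun x) ∈ B n
      rwa [w.left_inv x hxd]
    exact ((isWord_wordOfList l).nonsingular hns V hVsub hVmeas).mpr
      (measure_mono_null himg (hTnull n))
  -- measure of neighborhoods, as a real number
  set G : ℕ → ℕ → ℝ := fun n k => (μ (nbhd Φ (A n) k)).toReal with hG
  have hGmono : ∀ n {k k'}, k ≤ k' → G n k ≤ G n k' := fun n {k k'} h =>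
    ENNReal.toReal_mono (measure_ne_top μ _) (measure_mono (nbhd_mono h))
  have hGub : ∀ n k, G n k ≤ 1 := by
    intro n k
    have := ENNReal.toReal_mono (by simp) (prob_le_one (μ := μ) (s := nbhd Φ (A n) k))
    simpa using this
  -- choose a good starting radius for each `n`
  have hchoice : ∀ n, ∃ kk, kk ≤ n ∧ ∀ L ≤ Nat.sqrt n,
      G n (kk + L) - G n kk ≤ 1 / (Nat.sqrt n : ℝ) := by
    intro n
    by_cases hn : Nat.sqrt n = 0
    · refine ⟨0, Nat.zero_le n, fun L hL => ?_⟩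
      have hL0 : L = 0 := Nat.le_zero.mp (hn ▸ hL)
      simp [hL0, hn]
    · set r := Nat.sqrt n with hr
      have hr1 : 1 ≤ r := Nat.one_le_iff_ne_zero.mpr hn
      by_contra hcon
      push_neg at hcon
      have hstep : ∀ j < r, 1 / (r : ℝ) < G n ((j + 1) * r) - G n (j * r) := by
        intro j hj
        have hjr : j * r ≤ n := by
          calc j * r ≤ r * r := Nat.mul_le_mul_right r (Nat.le_of_lt hj)
          _ ≤ n := Nat.sqrt_le n
        obtain ⟨L, hL, hLgt⟩ := hcon (j * r) hjr
        have h2 : G n (j * r + L) ≤ G n ((j + 1) * r) := by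
          apply hGmono
          have h' : j * r + L ≤ j * r + r := Nat.add_le_add_left hL _
          simpa [Nat.succ_mul] using h'
        linarith
      have hsum1 : ∑ j ∈ Finset.range r, (1 / (r : ℝ)) <
          ∑ j ∈ Finset.range r, (G n ((j + 1) * r) - G n (j * r)) := by
        apply Finset.sum_lt_sum_of_nonempty
        · exact Finset.nonempty_range_iff.mpr hn
        · intro j hj
          exact hstep j (Finset.mem_range.mp hj)
      have hsum2 : ∑ j ∈ Finset.range r, (G n ((j + 1) * r) - G n (j * r))
          = G n (r * r) - G n 0 := by
        simpa using Finset.sum_range_sub (fun j => G n (j * r)) r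
      have hconst : ∑ j ∈ Finset.range r, (1 / (r : ℝ)) = 1 := by
        rw [Finset.sum_const, Finset.card_range, nsmul_eq_mul]
        field_simp
      have h0 : (0 : ℝ) ≤ G n 0 := ENNReal.toReal_nonneg
      have h1 : G n (r * r) ≤ 1 := hGub n _
      rw [hsum2, hconst] at hsum1
      linarith
  choose kk hkk_le hkk using hchoice
  refine ⟨fun n => nbhd Φ (A n) (kk n), fun n => measurableSet_nbhd hfin (hA n) _, ?_, ?_⟩
  · -- asymptotic invariance
    intro m L hword
    have hupper : Tendsto (fun n : ℕ => ENNReal.ofReal (1 / (Nat.sqrt n : ℝ)))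
        atTop (nhds 0) := by
      have hsqrt : Tendsto Nat.sqrt atTop atTop := by
        apply tendsto_atTop_atTop.mpr
        intro b
        refine ⟨b * b, fun n hn => ?_⟩
        have := Nat.sqrt_le_sqrt hn
        rwa [Nat.sqrt_eq] at this
      have hreal : Tendsto (fun n : ℕ => 1 / (Nat.sqrt n : ℝ)) atTop (nhds 0) :=
        tendsto_one_div_atTop_nhds_zero_nat.comp hsqrt
      have := ENNReal.tendsto_ofReal hreal
      simpa using this
    apply tendsto_of_tendsto_of_tendsto_of_le_of_le' tendsto_const_nhds hupper
    · exact Eventually.of_forall fun n => zero_le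
    · filter_upwards [eventually_ge_atTop (L * L)] with n hn
      have hLsqrt : L ≤ Nat.sqrt n := by
        have := Nat.sqrt_le_sqrt hn
        rwa [Nat.sqrt_eq] at this
      have hsub : m.toFun '' (nbhd Φ (A n) (kk n) ∩ m.dom) \ nbhd Φ (A n) (kk n) ⊆
          nbhd Φ (A n) (kk n + L) \ nbhd Φ (A n) (kk n) :=
        Set.diff_subset_diff_left (image_nbhd_subset hword)
      refine (measure_mono hsub).trans ?_
      have hdiff : μ (nbhd Φ (A n) (kk n + L) \ nbhd Φ (A n) (kk n))
          = μ (nbhd Φ (A n) (kk n + L)) - μ (nbhd Φ (A n) (kk n)) :=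
        measure_diff (nbhd_mono (Nat.le_add_right _ _))
          (measurableSet_nbhd hfin (hA n) _).nullMeasurableSet (measure_ne_top μ _)
      rw [hdiff]
      rw [ENNReal.le_ofReal_iff_toReal_le (ne_top_of_le_ne_top (measure_ne_top μ _)
        tsub_le_self) (by positivity)]
      rw [ENNReal.toReal_sub_of_le (measure_mono (nbhd_mono (Nat.le_add_right _ _)))
        (measure_ne_top μ _)]
      exact hkk n L hLsqrt
  · -- nontriviality
    refine ⟨δ, hδ, fun n => ⟨(hAδ n).trans (measure_mono subset_nbhd), ?_⟩⟩
    have h1 : μ (nbhd Φ (A n) (kk n)) ≤ μ (nbhd Φ (A n) n) :=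
      measure_mono (nbhd_mono (hkk_le n))
    have h2 : μ (nbhd Φ (A n) n) ≤ μ ((B n)ᶜ) := by
      calc μ (nbhd Φ (A n) n)
          ≤ μ (nbhd Φ (A n) n ∩ B n) + μ (nbhd Φ (A n) n \ B n) :=
            measure_le_inter_add_diff μ _ _
        _ = μ (nbhd Φ (A n) n \ B n) := by rw [hSB n, zero_add]
        _ ≤ μ ((B n)ᶜ) := measure_mono (Set.diff_subset_compl _ _)
    have h3 : μ ((B n)ᶜ) = 1 - μ (B n) := prob_compl_eq_one_sub (hB n)
    calc μ (nbhd Φ (A n) (kk n)) ≤ 1 - μ (B n) := by rw [← h3]; exact h1.trans h2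
      _ ≤ 1 - δ := tsub_le_tsub_left (hBδ n) 1
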